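/- Let n ≥ 1 and let p1, p2 : Fin n → ℕ be positive processing times. For v ∈ ℕ let d(v) = |{i : p1 i = v}| − |{i : p2 i = v}| (as an integer). Then a feasible sequence exists if and only if both of the following hold: (i) either d(v) = 0 for every v, or there exist two distinct values u, w with d(u) = 1, d(w) = −1 and d(v) = 0 for every other v; and (ii) the instance is connected, i.e. the equivalence relation on Fin n generated by the relation 'i ~ j iff the sets {p1 i, p2 i} and {p1 j, p2 j} intersect' relates every pair of jobs. -/

import Mathlib

/-- A sequence `σ` for a two-machine no-idle/no-wait flow shop instance is feasible
if `p2 (σ j) = p1 (σ (j+1))` for every position `j` with `j+1 < n`. -/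
def FeasibleSeq (n : ℕ) (p1 p2 : Fin n → ℕ) (σ : Fin n ≃ Fin n) : Prop :=
  ∀ j : Fin n, ∀ h : (j : ℕ) + 1 < n, p2 (σ j) = p1 (σ ⟨(j : ℕ) + 1, h⟩)

/-- The degree balance `d(v) = |{i : p1 i = v}| − |{i : p2 i = v}|` of a value `v`. -/
def degBal (n : ℕ) (p1 p2 : Fin n → ℕ) (v : ℕ) : ℤ :=
  ((Finset.univ.filter (fun i : Fin n => p1 i = v)).card : ℤ)
    - ((Finset.univ.filter (fun i : Fin n => p2 i = v)).card : ℤ)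
open Finset
variable {n : ℕ} (p1 p2 : Fin n → ℕ)
def cnt (f : Fin n → ℕ) (l : List (Fin n)) (x : ℕ) : ℕ :=
  (l.filter (fun e => f e = x)).length
def outd (f : Fin n → ℕ) (S : Finset (Fin n)) (x : ℕ) : ℕ :=
  (S.filter (fun e => f e = x)).card

lemma cnt_cons (f : Fin n → ℕ) (e : Fin n) (l : List (Fin n)) (x : ℕ) :
    cnt f (e :: l) x = (if f e = x then 1 else 0) + cnt f l x := by
  simp only [cnt, List.filter_cons]
  by_cases h : f e = x <;> simp [h]; omega

lemma cnt_eq_outd (f : Fin n → ℕ) {l : List (Fin n)} (h : l.Nodup) (x : ℕ) :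
    cnt f l x = outd f l.toFinset x := by
  classical
  induction l with
  | nil => simp [cnt, outd]
  | cons e t ih =>
      have ht : t.Nodup := h.of_cons
      have he : e ∉ t := by simp [List.nodup_cons] at h; exact h.1
      rw [cnt_cons, ih ht]
      simp only [List.toFinset_cons, outd]
      rw [Finset.filter_insert]
      split_ifs with hfe
      · rw [Finset.card_insert_of_notMem (by simp [he])]; omega
      · omega

lemma count_chain (e : Fin n) (l : List (Fin n))
    (hc : List.Chain' (fun a b => p2 a = p1 b) (e :: l)) (x : ℕ) :
    cnt p1 (e :: l) x + (if p2 ((e :: l).getLast (by simp)) = x then 1 else 0)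
      = cnt p2 (e :: l) x + (if p1 e = x then 1 else 0) := by
  induction l generalizing e with
  | nil => simp only [List.getLast_singleton, cnt_cons]; simp [cnt]; exact Nat.add_comm _ _
  | cons e' t ih =>
      have h1 : p2 e = p1 e' := (List.isChain_cons_cons.mp hc).1
      have h2 := (List.isChain_cons_cons.mp hc).2
      have key := ih e' h2
      rw [List.getLast_cons (by simp), cnt_cons p1 e (e' :: t), cnt_cons p2 e (e' :: t), h1]
      omega

lemma exists_max (S : Finset (Fin n)) : ∀ (k : ℕ) (l : List (Fin n)) (hne : l ≠ []),
    (S \ l.toFinset).card ≤ k → l.Nodup → List.Chain' (fun a b => p2 a = p1 b) l →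
    (∀ e ∈ l, e ∈ S) →
    ∃ (m : List (Fin n)) (hm : m ≠ []), l <+: m ∧ m.Nodup ∧
      List.Chain' (fun a b => p2 a = p1 b) m ∧ (∀ e ∈ m, e ∈ S) ∧
      ∀ e ∈ S, e ∉ m → p1 e ≠ p2 (m.getLast hm) := by
  intro k
  induction k with
  | zero =>
      intro l hne hcard hnd hc hsub
      refine ⟨l, hne, List.prefix_refl l, hnd, hc, hsub, ?_⟩
      intro e heS hel _
      have : e ∈ S \ l.toFinset := by
        simp [Finset.mem_sdiff, heS, List.mem_toFinset, hel]
      have hemp : S \ l.toFinset = ∅ := Finset.card_eq_zero.mp (Nat.le_zero.mp hcard)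
      simp [hemp] at this
  | succ k ih =>
      intro l hne hcard hnd hc hsub
      by_cases hex : ∃ e ∈ S, e ∉ l ∧ p1 e = p2 (l.getLast hne)
      · obtain ⟨e, heS, hel, hpe⟩ := hex
        have hne' : l ++ [e] ≠ [] := by simp
        have hnd' : (l ++ [e]).Nodup := by
          simp [List.nodup_append, hnd, hel]; intro a ha h; exact hel (h ▸ ha)
        have hc' : List.Chain' (fun a b => p2 a = p1 b) (l ++ [e]) := by
          simp only [List.Chain']; rw [List.isChain_append]
          refine ⟨hc, List.isChain_singleton e, ?_⟩
          intro y hy z hz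
          rw [List.getLast?_eq_getLast hne] at hy
          simp at hy hz
          rw [← hy, ← hz]; exact hpe.symm
        have hsub' : ∀ f ∈ l ++ [e], f ∈ S := by
          intro f hf
          rcases List.mem_append.mp hf with h | h
          · exact hsub f h
          · simp at h; rw [h]; exact heS
        have hcard' : (S \ (l ++ [e]).toFinset).card ≤ k := by
          have hss : S \ (l ++ [e]).toFinset ⊂ S \ l.toFinset := by
            constructor
            · intro a ha
              simp only [Finset.mem_sdiff, List.toFinset_append, Finset.mem_union,
                List.mem_toFinset] at ha ⊢
              exact ⟨ha.1, fun h => ha.2 (Or.inl h)⟩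
            · intro hsub2
              have he1 : e ∈ S \ l.toFinset := by
                simp [Finset.mem_sdiff, heS, List.mem_toFinset, hel]
              have := hsub2 he1
              simp [Finset.mem_sdiff, List.toFinset_append] at this
          have := Finset.card_lt_card hss
          omega
        obtain ⟨m, hm, hpre, h1, h2, h3, h4⟩ := ih (l ++ [e]) hne' hcard' hnd' hc' hsub'
        exact ⟨m, hm, (List.prefix_append l [e]).trans hpre, h1, h2, h3, h4⟩
      · push_neg at hex
        refine ⟨l, hne, List.prefix_refl l, hnd, hc, hsub, ?_⟩
        intro e heS hel
        exact hex e heS hel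

lemma max_end (S : Finset (Fin n)) (m : List (Fin n)) (hm : m ≠ []) (hnd : m.Nodup)
    (hsub : ∀ e ∈ m, e ∈ S)
    (hmax : ∀ e ∈ S, e ∉ m → p1 e ≠ p2 (m.getLast hm)) :
    outd p1 S (p2 (m.getLast hm)) = cnt p1 m (p2 (m.getLast hm)) := by
  rw [cnt_eq_outd p1 hnd]
  unfold outd
  congr 1
  ext e
  simp only [Finset.mem_filter, List.mem_toFinset]
  constructor
  · rintro ⟨heS, hpe⟩
    by_cases hem : e ∈ m
    · exact ⟨hem, hpe⟩
    · exact absurd hpe (hmax e heS hem)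
  · rintro ⟨hem, hpe⟩
    exact ⟨hsub e hem, hpe⟩

lemma outd_mono (f : Fin n → ℕ) {T S : Finset (Fin n)} (h : T ⊆ S) (v : ℕ) :
    outd f T v ≤ outd f S v :=
  Finset.card_le_card (Finset.filter_subset_filter _ h)

lemma outd_sdiff (f : Fin n → ℕ) {T S : Finset (Fin n)} (h : T ⊆ S) (v : ℕ) :
    outd f S v = outd f T v + outd f (S \ T) v := by
  unfold outd
  rw [← Finset.card_union_of_disjoint
    (Finset.disjoint_filter_filter Finset.disjoint_sdiff),
    ← Finset.filter_union, Finset.union_sdiff_of_subset h]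

lemma exists_closed (S : Finset (Fin n))
    (hbal : ∀ v, outd p1 S v = outd p2 S v) (x : ℕ) (hx : 0 < outd p1 S x) :
    ∃ (C : List (Fin n)) (hC : C ≠ []), C.Nodup ∧
      List.Chain' (fun a b => p2 a = p1 b) C ∧ (∀ e ∈ C, e ∈ S) ∧
      p1 (C.head hC) = x ∧ p2 (C.getLast hC) = x := by
  have : (S.filter (fun e => p1 e = x)).Nonempty := by
    rw [← Finset.card_pos]; exact hx
  obtain ⟨e₀, he₀⟩ := this
  rw [Finset.mem_filter] at he₀
  obtain ⟨m, hm, hpre, hnd, hc, hsub, hmax⟩ := exists_max p1 p2 S (S \ [e₀].toFinset).card [e₀]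
    (by simp) le_rfl (by simp) (List.isChain_singleton e₀) (by simpa using he₀.1)
  obtain ⟨r, rfl⟩ := hpre
  simp only [List.singleton_append] at hm hnd hc hsub hmax
  set t := p2 ((e₀ :: r).getLast hm) with ht
  have hend := max_end p1 p2 S (e₀ :: r) hm hnd hsub hmax
  rw [← ht] at hend
  have hcc := count_chain p1 p2 e₀ r hc t
  rw [if_pos rfl] at hcc
  have h2le : cnt p2 (e₀ :: r) t ≤ outd p2 S t := by
    rw [cnt_eq_outd p2 hnd]
    exact outd_mono p2 (fun e he => hsub e (by simpa using he)) t
  have hbt := hbal t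
  have hte : p1 e₀ = t := by
    by_contra hne
    rw [if_neg hne] at hcc
    omega
  refine ⟨e₀ :: r, hm, hnd, hc, hsub, he₀.2, ?_⟩
  show t = x
  rw [← hte]; exact he₀.2

/-- `x` is a vertex visited by the trail `l`. -/
def Vis (l : List (Fin n)) (x : ℕ) : Prop :=
  (∃ h : l ≠ [], p1 (l.head h) = x) ∨ ∃ a e b, l = a ++ e :: b ∧ p2 e = x

lemma vis_of_mem {l : List (Fin n)} (hc : List.Chain' (fun a b => p2 a = p1 b) l)
    {f : Fin n} (hf : f ∈ l) : Vis p1 p2 l (p1 f) ∧ Vis p1 p2 l (p2 f) := by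
  obtain ⟨a, b, rfl⟩ := List.append_of_mem hf
  constructor
  · cases a with
    | nil => exact Or.inl ⟨by simp, by simp⟩
    | cons a0 a' =>
        have hane : (a0 :: a') ≠ [] := by simp
        have hlink : p2 ((a0 :: a').getLast hane) = p1 f := by
          simp only [List.Chain'] at hc; rw [List.isChain_append] at hc
          exact hc.2.2 _ (List.getLast?_eq_getLast hane) f rfl
        refine Or.inr ⟨(a0 :: a').dropLast, (a0 :: a').getLast hane, f :: b, ?_, hlink⟩
        rw [show (a0 :: a').getLast hane :: f :: b = [(a0 :: a').getLast hane] ++ f :: b from rfl,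
          ← List.append_assoc, List.dropLast_append_getLast hane]
  · exact Or.inr ⟨a, f, b, rfl, rfl⟩

lemma splice (l C : List (Fin n)) (x : ℕ)
    (hl : List.Chain' (fun a b => p2 a = p1 b) l)
    (hC : List.Chain' (fun a b => p2 a = p1 b) C) (hCne : C ≠ [])
    (hh : p1 (C.head hCne) = x) (hlast : p2 (C.getLast hCne) = x)
    (hvis : Vis p1 p2 l x) :
    ∃ m : List (Fin n), List.Chain' (fun a b => p2 a = p1 b) m ∧ m.Perm (l ++ C) := by
  rcases hvis with ⟨hlne, hhead⟩ | ⟨a, e, b, rfl, hpe⟩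
  · refine ⟨C ++ l, ?_, List.perm_append_comm⟩
    simp only [List.Chain']; rw [List.isChain_append]
    refine ⟨hC, hl, ?_⟩
    intro y hy z hz
    rw [List.getLast?_eq_getLast hCne] at hy
    rw [List.head?_eq_head hlne] at hz
    simp at hy hz
    rw [← hy, ← hz, hlast, ← hhead]
  · refine ⟨a ++ e :: (C ++ b), ?_, ?_⟩
    · simp only [List.Chain'] at hl ⊢; rw [List.isChain_append] at hl ⊢
      obtain ⟨ha, heb, hlink⟩ := hl
      rw [List.isChain_cons] at heb ⊢
      obtain ⟨hlink2, hb⟩ := heb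
      refine ⟨ha, ⟨?_, ?_⟩, ?_⟩
      · -- link e → head (C ++ b)
        intro y hy
        rw [List.head?_append_of_ne_nil _ hCne] at hy
        rw [List.head?_eq_head hCne] at hy
        simp at hy
        rw [← hy, hh, ← hpe]
      · -- chain C ++ b
        rw [List.isChain_append]
        refine ⟨hC, hb, ?_⟩
        intro y hy z hz
        rw [List.getLast?_eq_getLast hCne] at hy
        simp at hy
        rw [← hy, hlast, ← hpe]
        exact hlink2 z hz
      · -- link a → e
        intro y hy z hz
        simp at hz
        rw [← hz]
        exact hlink y hy e rfl
    · have h1 : (a ++ e :: (C ++ b)).Perm (a ++ e :: (b ++ C)) :=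
        List.Perm.append_left a (List.Perm.cons e List.perm_append_comm)
      have h2 : a ++ e :: (b ++ C) = (a ++ e :: b) ++ C := by simp
      exact h2 ▸ h1

lemma touch
    (hconn : ∀ i j : Fin n, Relation.EqvGen
      (fun a b : Fin n => (({p1 a, p2 a} : Set ℕ) ∩ {p1 b, p2 b}).Nonempty) i j)
    (l : List (Fin n)) (hne : l ≠ [])
    (hc : List.Chain' (fun a b => p2 a = p1 b) l)
    (hrem : (Finset.univ \ l.toFinset).Nonempty) :
    ∃ g ∈ Finset.univ \ l.toFinset, ∃ x, (p1 g = x ∨ p2 g = x) ∧ Vis p1 p2 l x := by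
  by_contra hcon
  push_neg at hcon
  have key : ∀ i j : Fin n,
      (({p1 i, p2 i} : Set ℕ) ∩ {p1 j, p2 j}).Nonempty → (i ∈ l ↔ j ∈ l) := by
    have main : ∀ i j : Fin n,
        (({p1 i, p2 i} : Set ℕ) ∩ {p1 j, p2 j}).Nonempty → i ∈ l → j ∈ l := by
      intro i j ⟨x, hx⟩ hil
      simp only [Set.mem_inter_iff, Set.mem_insert_iff, Set.mem_singleton_iff] at hx
      by_contra hjl
      have hjrem : j ∈ Finset.univ \ l.toFinset := by
        simp [Finset.mem_sdiff, List.mem_toFinset, hjl]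
      have hvis : Vis p1 p2 l x := by
        rcases hx.1 with h | h
        · exact h ▸ (vis_of_mem p1 p2 hc hil).1
        · exact h ▸ (vis_of_mem p1 p2 hc hil).2
      rcases hx.2 with h | h
      · exact hcon j hjrem x (Or.inl h.symm) hvis
      · exact hcon j hjrem x (Or.inr h.symm) hvis
    intro i j hij
    have hji : (({p1 j, p2 j} : Set ℕ) ∩ {p1 i, p2 i}).Nonempty := by
      obtain ⟨x, hx⟩ := hij
      exact ⟨x, hx.2, hx.1⟩
    exact ⟨main i j hij, main j i hji⟩
  obtain ⟨g, hg⟩ := hrem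
  have hgl : g ∉ l := by
    simp only [Finset.mem_sdiff, List.mem_toFinset] at hg
    exact hg.2
  have hhl : l.head hne ∈ l := List.head_mem hne
  have step : ∀ i j : Fin n, Relation.EqvGen
      (fun a b : Fin n => (({p1 a, p2 a} : Set ℕ) ∩ {p1 b, p2 b}).Nonempty) i j →
      (i ∈ l ↔ j ∈ l) := by
    intro i j h
    induction h with
    | rel a b h => exact key a b h
    | refl a => exact Iff.rfl
    | symm a b _ ih => exact ih.symm
    | trans a b c _ _ ih1 ih2 => exact ih1.trans ih2
  exact hgl ((step g (l.head hne) (hconn _ _)).mpr hhl)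

lemma loop
    (hconn : ∀ i j : Fin n, Relation.EqvGen
      (fun a b : Fin n => (({p1 a, p2 a} : Set ℕ) ∩ {p1 b, p2 b}).Nonempty) i j) :
    ∀ (k : ℕ) (l : List (Fin n)), l ≠ [] →
    (Finset.univ \ l.toFinset).card ≤ k → l.Nodup →
    List.Chain' (fun a b => p2 a = p1 b) l →
    (∀ v, outd p1 (Finset.univ \ l.toFinset) v = outd p2 (Finset.univ \ l.toFinset) v) →
    ∃ m : List (Fin n), m.Nodup ∧
      List.Chain' (fun a b => p2 a = p1 b) m ∧ m.toFinset = Finset.univ := by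
  intro k
  induction k with
  | zero =>
      intro l hne hcard hnd hc _
      refine ⟨l, hnd, hc, ?_⟩
      have hemp : Finset.univ \ l.toFinset = ∅ := Finset.card_eq_zero.mp (Nat.le_zero.mp hcard)
      have := Finset.sdiff_eq_empty_iff_subset.mp hemp
      exact Finset.eq_univ_iff_forall.mpr fun i => this (Finset.mem_univ i)
  | succ k ih =>
      intro l hne hcard hnd hc hbal
      by_cases hemp : (Finset.univ \ l.toFinset) = ∅
      · refine ⟨l, hnd, hc, ?_⟩
        have := Finset.sdiff_eq_empty_iff_subset.mp hemp
        exact Finset.eq_univ_iff_forall.mpr fun i => this (Finset.mem_univ i)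
      · set S := Finset.univ \ l.toFinset with hS
        have hSne : S.Nonempty := Finset.nonempty_of_ne_empty hemp
        obtain ⟨g, hgS, x, hgx, hvis⟩ := touch p1 p2 hconn l hne hc hSne
        -- x has positive out-degree in S
        have hxpos : 0 < outd p1 S x := by
          rcases hgx with h | h
          · exact Finset.card_pos.mpr ⟨g, Finset.mem_filter.mpr ⟨hgS, h⟩⟩
          · rw [hbal x]
            exact Finset.card_pos.mpr ⟨g, Finset.mem_filter.mpr ⟨hgS, h⟩⟩
        obtain ⟨C, hCne, hCnd, hCc, hCsub, hCh, hCl⟩ := exists_closed p1 p2 S hbal x hxpos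
        obtain ⟨m, hmc, hmp⟩ := splice p1 p2 l C x hc hCc hCne hCh hCl hvis
        -- properties of m
        have hCdisj : ∀ e ∈ C, e ∉ l := by
          intro e he
          have := hCsub e he
          rw [hS, Finset.mem_sdiff, List.mem_toFinset] at this
          exact this.2
        have hmnd : m.Nodup := by
          refine hmp.nodup_iff.mpr ?_
          rw [List.nodup_append]
          exact ⟨hnd, hCnd, fun e hel e' heC h => hCdisj e' heC (h ▸ hel)⟩
        have hmfin : m.toFinset = l.toFinset ∪ C.toFinset := by
          ext a
          simp [List.mem_toFinset, hmp.mem_iff]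
        have hmne : m ≠ [] := by
          intro h
          rw [h] at hmp
          have := hmp.length_eq
          simp at this
          exact hCne (List.length_eq_zero_iff.mp (by omega))
        have hCsubS : C.toFinset ⊆ S := fun e he => hCsub e (List.mem_toFinset.mp he)
        have hrem' : Finset.univ \ m.toFinset = S \ C.toFinset := by
          rw [hmfin, hS]
          ext a
          simp only [Finset.mem_sdiff, Finset.mem_union, Finset.mem_univ, true_and]
          tauto
        -- C is a closed trail, so its counts balance
        have hCbal : ∀ v, cnt p1 C v = cnt p2 C v := by
          intro v
          cases C with
          | nil => simp at hCne
          | cons c0 ct =>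
              have := count_chain p1 p2 c0 ct hCc v
              have hch : p1 c0 = p2 ((c0 :: ct).getLast (by simp)) := by
                rw [hCl]; exact hCh
              rw [← hch] at this
              split_ifs at this <;> omega
        have hbal' : ∀ v, outd p1 (Finset.univ \ m.toFinset) v
            = outd p2 (Finset.univ \ m.toFinset) v := by
          intro v
          rw [hrem']
          have h1 := outd_sdiff p1 hCsubS v
          have h2 := outd_sdiff p2 hCsubS v
          have e1 : outd p1 C.toFinset v = outd p2 C.toFinset v := by
            rw [← cnt_eq_outd p1 hCnd, ← cnt_eq_outd p2 hCnd, hCbal]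
          have := hbal v
          omega
        have hcard' : (Finset.univ \ m.toFinset).card ≤ k := by
          have hssub : Finset.univ \ m.toFinset ⊂ S := by
            rw [hrem']
            refine Finset.sdiff_ssubset hCsubS ?_
            cases C with
            | nil => simp at hCne
            | cons c0 ct => exact ⟨c0, by simp⟩
          have := Finset.card_lt_card hssub
          omega
        exact ih m hmne hcard' hmnd hmc hbal'

lemma degBal_eq (v : ℕ) :
    degBal n p1 p2 v = (outd p1 Finset.univ v : ℤ) - outd p2 Finset.univ v := rfl

lemma phase1 (hn : 1 ≤ n)
    (hdeg : (∀ v : ℕ, degBal n p1 p2 v = 0) ∨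
      (∃ u w : ℕ, u ≠ w ∧ degBal n p1 p2 u = 1 ∧ degBal n p1 p2 w = -1 ∧
        ∀ v : ℕ, v ≠ u → v ≠ w → degBal n p1 p2 v = 0)) :
    ∃ (m : List (Fin n)) (_ : m ≠ []), m.Nodup ∧
      List.Chain' (fun a b => p2 a = p1 b) m ∧
      ∀ v, outd p1 (Finset.univ \ m.toFinset) v = outd p2 (Finset.univ \ m.toFinset) v := by
  rcases hdeg with hbal | ⟨u, w, huw, hdu, hdw, hdo⟩
  · -- balanced case : start anywhere
    have hbalv : ∀ v, outd p1 Finset.univ v = outd p2 Finset.univ v := by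
      intro v
      have := hbal v
      rw [degBal_eq] at this
      omega
    set e₀ : Fin n := ⟨0, hn⟩ with he₀
    obtain ⟨m, hm, hpre, hnd, hc, _, hmax⟩ := exists_max p1 p2 Finset.univ
      (Finset.univ \ [e₀].toFinset).card [e₀] (by simp) le_rfl (by simp)
      (List.isChain_singleton e₀) (by simp)
    obtain ⟨r, rfl⟩ := hpre
    simp only [List.singleton_append] at hm hnd hc hmax ⊢
    set t := p2 ((e₀ :: r).getLast hm) with ht
    have hend := max_end p1 p2 Finset.univ (e₀ :: r) hm hnd (by simp) hmax
    rw [← ht] at hend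
    have hcc := count_chain p1 p2 e₀ r hc t
    rw [if_pos rfl] at hcc
    have h2le : cnt p2 (e₀ :: r) t ≤ outd p2 Finset.univ t := by
      rw [cnt_eq_outd p2 hnd]
      exact outd_mono p2 (Finset.subset_univ _) t
    have hts : p1 e₀ = t := by
      by_contra hne2
      rw [if_neg hne2] at hcc
      have := hbalv t
      omega
    refine ⟨e₀ :: r, hm, hnd, hc, ?_⟩
    intro v
    have hA1 := outd_sdiff p1 (Finset.subset_univ (e₀ :: r).toFinset) v
    have hA2 := outd_sdiff p2 (Finset.subset_univ (e₀ :: r).toFinset) v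
    rw [← cnt_eq_outd p1 hnd] at hA1
    rw [← cnt_eq_outd p2 hnd] at hA2
    have hB := count_chain p1 p2 e₀ r hc v
    rw [← ht, hts] at hB
    have := hbalv v
    omega
  · -- imbalanced case : start at u
    have hdu' : (outd p1 Finset.univ u : ℤ) - outd p2 Finset.univ u = 1 := by
      rw [← degBal_eq]; exact hdu
    have hdw' : (outd p1 Finset.univ w : ℤ) - outd p2 Finset.univ w = -1 := by
      rw [← degBal_eq]; exact hdw
    have hx : 0 < outd p1 Finset.univ u := by omega
    have : (Finset.univ.filter (fun e : Fin n => p1 e = u)).Nonempty := by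
      rw [← Finset.card_pos]; exact hx
    obtain ⟨e₀, he₀⟩ := this
    rw [Finset.mem_filter] at he₀
    obtain ⟨m, hm, hpre, hnd, hc, _, hmax⟩ := exists_max p1 p2 Finset.univ
      (Finset.univ \ [e₀].toFinset).card [e₀] (by simp) le_rfl (by simp)
      (List.isChain_singleton e₀) (by simp)
    obtain ⟨r, rfl⟩ := hpre
    simp only [List.singleton_append] at hm hnd hc hmax ⊢
    set t := p2 ((e₀ :: r).getLast hm) with ht
    have hend := max_end p1 p2 Finset.univ (e₀ :: r) hm hnd (by simp) hmax
    rw [← ht] at hend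
    have hcc := count_chain p1 p2 e₀ r hc t
    rw [if_pos rfl, he₀.2] at hcc
    have h2le : cnt p2 (e₀ :: r) t ≤ outd p2 Finset.univ t := by
      rw [cnt_eq_outd p2 hnd]
      exact outd_mono p2 (Finset.subset_univ _) t
    have htw : t = w := by
      by_contra htw
      rcases eq_or_ne t u with htu | htu
      · rw [if_pos htu.symm] at hcc
        rw [htu] at hend h2le hcc
        omega
      · rw [if_neg (fun h => htu h.symm)] at hcc
        have hdt : (outd p1 Finset.univ t : ℤ) - outd p2 Finset.univ t = 0 := by
          rw [← degBal_eq]; exact hdo t htu htw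
        omega
    refine ⟨e₀ :: r, hm, hnd, hc, ?_⟩
    intro v
    have hA1 := outd_sdiff p1 (Finset.subset_univ (e₀ :: r).toFinset) v
    have hA2 := outd_sdiff p2 (Finset.subset_univ (e₀ :: r).toFinset) v
    rw [← cnt_eq_outd p1 hnd] at hA1
    rw [← cnt_eq_outd p2 hnd] at hA2
    have hB := count_chain p1 p2 e₀ r hc v
    rw [← ht, htw, he₀.2] at hB
    rcases eq_or_ne v u with rfl | hvu
    · rw [if_neg (fun h => huw h.symm), if_pos rfl] at hB
      omega
    · rcases eq_or_ne v w with rfl | hvw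
      · rw [if_pos rfl, if_neg (fun h => hvu h.symm)] at hB
        omega
      · rw [if_neg (fun h => hvw h.symm), if_neg (fun h => hvu h.symm)] at hB
        have hdv : (outd p1 Finset.univ v : ℤ) - outd p2 Finset.univ v = 0 := by
          rw [← degBal_eq]; exact hdo v hvu hvw
        omega

lemma sigma_of_list (m : List (Fin n)) (hnd : m.Nodup)
    (hc : List.Chain' (fun a b => p2 a = p1 b) m) (hfin : m.toFinset = Finset.univ) :
    ∃ σ : Fin n ≃ Fin n, FeasibleSeq n p1 p2 σ := by
  have hlen : m.length = n := by
    rw [← List.toFinset_card_of_nodup hnd, hfin]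
    simp
  set f : Fin n → Fin n := fun j => m.get (Fin.cast hlen.symm j) with hf
  have hinj : Function.Injective f := by
    intro a b hab
    have := (List.nodup_iff_injective_get).mp hnd hab
    have h2 : (a : ℕ) = (b : ℕ) := by
      have := congrArg Fin.val this
      simpa using this
    exact Fin.ext h2
  refine ⟨Equiv.ofBijective f ((Finite.injective_iff_bijective).mp hinj), ?_⟩
  intro j h
  show p2 (f j) = p1 (f ⟨(j : ℕ) + 1, h⟩)
  have hkey := List.isChain_iff_getElem.mp hc (j : ℕ) (by omega)
  have h1 : f j = m.get ⟨(j : ℕ), by omega⟩ := by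
    congr 1
  have h2 : f ⟨(j : ℕ) + 1, h⟩ = m.get ⟨(j : ℕ) + 1, by omega⟩ := by
    congr 1
  rw [h1, h2]
  exact hkey

lemma list_of_sigma (σ : Fin n ≃ Fin n) (hσ : FeasibleSeq n p1 p2 σ) :
    ∃ m : List (Fin n), m.Nodup ∧
      List.Chain' (fun a b => p2 a = p1 b) m ∧ m.toFinset = Finset.univ ∧
      m = List.ofFn (fun j => σ j) := by
  refine ⟨List.ofFn (fun j => σ j), ?_, ?_, ?_, rfl⟩
  · exact (List.nodup_ofFn).mpr σ.injective
  · simp only [List.Chain']; rw [List.isChain_iff_getElem]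
    intro i hi
    simp only [List.length_ofFn] at hi
    rw [List.getElem_ofFn, List.getElem_ofFn]
    have := hσ ⟨i, by omega⟩ (by simpa using by omega)
    convert this using 3 <;> simp
  · apply Finset.eq_univ_iff_forall.mpr
    intro i
    rw [List.mem_toFinset, List.mem_ofFn]
    exact ⟨σ.symm i, σ.apply_symm_apply i⟩

/-- a feasible sequence exists iff (i) either all degree balances are 0,
or exactly one value has balance 1, one has balance -1 and all others 0; and
(ii) the instance is connected: the equivalence relation generated by
"the value sets `{p1 i, p2 i}` and `{p1 j, p2 j}` intersect" relates all jobs. -/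
theorem stmt_6 (n : ℕ) (hn : 1 ≤ n) (p1 p2 : Fin n → ℕ)
    (hp1 : ∀ i, 0 < p1 i) (hp2 : ∀ i, 0 < p2 i) :
    (∃ σ : Fin n ≃ Fin n, FeasibleSeq n p1 p2 σ) ↔
      (((∀ v : ℕ, degBal n p1 p2 v = 0) ∨
          (∃ u w : ℕ, u ≠ w ∧ degBal n p1 p2 u = 1 ∧ degBal n p1 p2 w = -1 ∧
            ∀ v : ℕ, v ≠ u → v ≠ w → degBal n p1 p2 v = 0))
        ∧ ∀ i j : Fin n,
            Relation.EqvGen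
              (fun a b : Fin n => (({p1 a, p2 a} : Set ℕ) ∩ {p1 b, p2 b}).Nonempty)
              i j) := by
  constructor
  · rintro ⟨σ, hσ⟩
    obtain ⟨m, hnd, hc, hfin, -⟩ := list_of_sigma p1 p2 σ hσ
    constructor
    · -- degree condition
      have hne : m ≠ [] := by
        intro h
        rw [h] at hfin
        have : (⟨0, hn⟩ : Fin n) ∈ (List.toFinset ([] : List (Fin n))) :=
          hfin ▸ Finset.mem_univ _
        simp at this
      obtain ⟨e₀, r, rfl⟩ : ∃ e r, m = e :: r := by
        cases m with
        | nil => exact absurd rfl hne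
        | cons a b => exact ⟨a, b, rfl⟩
      set t := p2 ((e₀ :: r).getLast (by simp)) with ht
      have hAv : ∀ (f : Fin n → ℕ) (v : ℕ), outd f Finset.univ v = cnt f (e₀ :: r) v := by
        intro f v
        rw [← hfin, ← cnt_eq_outd f hnd]
      have hDB : ∀ v : ℕ, degBal n p1 p2 v
          = (cnt p1 (e₀ :: r) v : ℤ) - cnt p2 (e₀ :: r) v := by
        intro v
        rw [degBal_eq p1 p2 v, hAv p1 v, hAv p2 v]
      by_cases hst : p1 e₀ = t
      · left
        intro v
        have hB := count_chain p1 p2 e₀ r hc v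
        rw [← ht, hst] at hB
        rw [hDB v]
        omega
      · right
        refine ⟨p1 e₀, t, hst, ?_, ?_, ?_⟩
        · have hB := count_chain p1 p2 e₀ r hc (p1 e₀)
          rw [← ht, if_neg (fun h => hst h.symm), if_pos rfl] at hB
          rw [hDB]
          omega
        · have hB := count_chain p1 p2 e₀ r hc t
          rw [← ht, if_pos rfl, if_neg hst] at hB
          rw [hDB]
          omega
        · intro v hvu hvw
          have hB := count_chain p1 p2 e₀ r hc v
          rw [← ht, if_neg (fun h => hvw h.symm), if_neg (fun h => hvu h.symm)] at hB
          rw [hDB]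
          omega
    · -- connectivity
      intro i j
      have base : ∀ (k : ℕ) (hk : k < n), Relation.EqvGen
          (fun a b : Fin n => (({p1 a, p2 a} : Set ℕ) ∩ {p1 b, p2 b}).Nonempty)
          (σ ⟨0, hn⟩) (σ ⟨k, hk⟩) := by
        intro k
        induction k with
        | zero => intro hk; exact Relation.EqvGen.refl _
        | succ k ihk =>
            intro hk
            have hk' : k < n := Nat.lt_of_succ_lt hk
            refine Relation.EqvGen.trans _ _ _ (ihk hk') (Relation.EqvGen.rel _ _ ?_)
            refine ⟨p2 (σ ⟨k, hk'⟩), by simp, ?_⟩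
            have := hσ ⟨k, hk'⟩ (by simpa using hk)
            simp only [Set.mem_insert_iff, Set.mem_singleton_iff]
            left
            convert this using 3
      have h0i := base (σ.symm i).val (σ.symm i).isLt
      have h0j := base (σ.symm j).val (σ.symm j).isLt
      simp only [Fin.eta, Equiv.apply_symm_apply] at h0i h0j
      exact Relation.EqvGen.trans _ _ _ (Relation.EqvGen.symm _ _ h0i) h0j
  · rintro ⟨hdeg, hconn⟩
    obtain ⟨m, hm, hnd, hc, hbal⟩ := phase1 p1 p2 hn hdeg
    obtain ⟨m2, hnd2, hc2, hfin2⟩ := loop p1 p2 hconn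
      (Finset.univ \ m.toFinset).card m hm le_rfl hnd hc hbal
    exact sigma_of_list p1 p2 m2 hnd2 hc2 hfin2
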